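/- The Segal–Bargmann transform is injective: if f : ℝ → ℂ is square-integrable and ∫_ℝ A(z,u) f(u) du = 0 for every z ∈ ℂ, then f = 0 almost everywhere on ℝ. -/

import Mathlib

open MeasureTheory Complex Real FourierTransform

/-- A smooth compactly supported function is a Schwartz map. -/
noncomputable def toSchwartzAux (φ : ℝ → ℂ) (hφ : ContDiff ℝ ((⊤ : ℕ∞) : WithTop ℕ∞) φ)
    (h : HasCompactSupport φ) : SchwartzMap ℝ ℂ where
  toFun := φ
  smooth' := hφ
  decay' := by
    intro k n
    have h1 : HasCompactSupport (iteratedFDeriv ℝ n φ) := h.iteratedFDeriv n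
    have hcont : Continuous fun x : ℝ => ‖x‖ ^ k * ‖iteratedFDeriv ℝ n φ x‖ :=
      (continuous_norm.pow k).mul (hφ.continuous_iteratedFDeriv (by exact_mod_cast le_top)).norm
    have h2 : HasCompactSupport fun x : ℝ => ‖x‖ ^ k * ‖iteratedFDeriv ℝ n φ x‖ := by
      apply HasCompactSupport.mul_left h1.norm
    obtain ⟨C, hC⟩ := h2.exists_bound_of_continuous hcont
    exact ⟨C, fun x => le_trans (Real.le_norm_self _) (hC x)⟩

/-- Fourier transform is injective on integrable functions on ℝ. -/
lemma fourier_inj {g : ℝ → ℂ} (hg : Integrable g (volume : Measure ℝ))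
    (h0 : ∀ ξ : ℝ, 𝓕 g ξ = 0) : ∀ᵐ u : ℝ, g u = 0 := by
  have key : ∀ F : SchwartzMap ℝ ℂ, (∫ x : ℝ, F x • g x) = 0 := by
    intro F
    set η : SchwartzMap ℝ ℂ := (SchwartzMap.fourierTransformCLE ℝ (SchwartzMap ℝ ℂ)).symm F with hη
    have h1 : 𝓕 (⇑η) = ⇑F := by
      have h2 := (SchwartzMap.fourierTransformCLE ℝ (SchwartzMap ℝ ℂ)).apply_symm_apply F
      calc 𝓕 (⇑η) = ⇑(SchwartzMap.fourierTransformCLE ℝ (SchwartzMap ℝ ℂ) η) := by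
            rfl
        _ = ⇑F := by rw [hη, h2]
    have swap := VectorFourier.integral_fourierIntegral_smul_eq_flip
      (e := Real.fourierChar) (L := innerₗ ℝ) (μ := (volume : Measure ℝ))
      (ν := (volume : Measure ℝ)) (f := ⇑η) (g := g)
      Real.continuous_fourierChar continuous_inner η.integrable hg
    rw [flip_innerₗ] at swap
    calc (∫ x : ℝ, F x • g x)
        = ∫ ξ : ℝ, 𝓕 (⇑η) ξ • g ξ := by rw [h1]
      _ = ∫ x : ℝ, η x • 𝓕 g x := swap
      _ = 0 := by simp only [h0, smul_zero, integral_zero]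
  have := ae_eq_zero_of_integral_contDiff_smul_eq_zero (μ := (volume : Measure ℝ))
    (f := g) hg.locallyIntegrable ?_
  · exact this
  · intro φ hφ hφc
    have hφℂ : ContDiff ℝ ((⊤ : ℕ∞) : WithTop ℕ∞) fun x : ℝ => (φ x : ℂ) :=
      Complex.ofRealCLM.contDiff.comp hφ
    have hφcℂ : HasCompactSupport fun x : ℝ => (φ x : ℂ) :=
      hφc.comp_left (g := fun r : ℝ => (r : ℂ)) (by simp)
    have hkey := key (toSchwartzAux _ hφℂ hφcℂ)
    have heq : (∫ x : ℝ, φ x • g x) = ∫ x : ℝ, (φ x : ℂ) • g x := by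
      congr 1 with x
    rw [heq]
    exact hkey

/-- The Bargmann kernel `A(z,u) = exp(-u²/2 + √2 u z - z²/2)`. -/
noncomputable def bargmannKernel (z : ℂ) (u : ℝ) : ℂ :=
  Complex.exp (-(u : ℂ) ^ 2 / 2 + (Real.sqrt 2 : ℂ) * (u : ℂ) * z - z ^ 2 / 2)

/-- The Segal–Bargmann transform is injective on `L²(ℝ)`. -/
theorem segalBargmann_injective (f : ℝ → ℂ)
    (hf : MemLp f 2 (volume : Measure ℝ))
    (h : ∀ z : ℂ, (∫ u : ℝ, bargmannKernel z u * f u) = 0) :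
    ∀ᵐ u : ℝ, f u = 0 := by
  set g : ℝ → ℂ := fun u => Complex.exp (-(u : ℂ) ^ 2 / 2) * f u with hg
  -- the complex Gaussian equals the real Gaussian
  have hre : ∀ u : ℝ, Complex.exp (-(u : ℂ) ^ 2 / 2) = ((Real.exp (-u ^ 2 / 2) : ℝ) : ℂ) := by
    intro u
    rw [Complex.ofReal_exp]
    congr 1
    push_cast
    ring
  -- the Gaussian is in L²
  have hgauss : MemLp (fun u : ℝ => Complex.exp (-(u : ℂ) ^ 2 / 2)) 2
      (volume : Measure ℝ) := by
    rw [memLp_two_iff_integrable_sq_norm]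
    · have heq : (fun u : ℝ => ‖Complex.exp (-(u : ℂ) ^ 2 / 2)‖ ^ 2)
          = fun u : ℝ => Real.exp (-(1 : ℝ) * u ^ 2) := by
        funext u
        rw [hre u, Complex.norm_real, Real.norm_eq_abs, abs_of_pos (Real.exp_pos _), sq,
          ← Real.exp_add]
        congr 1
        ring
      rw [heq]
      exact integrable_exp_neg_mul_sq one_pos
    · exact (Complex.continuous_exp.comp (by fun_prop)).aestronglyMeasurable
  -- g is integrable
  have hgint : Integrable g (volume : Measure ℝ) := by
    rw [← memLp_one_iff_integrable]
    have h12 : (1 : ENNReal) / 1 = 1 / 2 + 1 / 2 := by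
      rw [ENNReal.div_add_div_same, one_add_one_eq_two,
        ENNReal.div_self (two_ne_zero) (ENNReal.ofNat_ne_top)]
      exact div_one 1
    have := hf.smul (φ := fun u : ℝ => Complex.exp (-(u : ℂ) ^ 2 / 2))
      (p := 2) (q := 2) (r := 1) hgauss
    exact this
  -- Fourier transform of g vanishes
  have hF : ∀ ξ : ℝ, 𝓕 g ξ = 0 := by
    intro ξ
    have hz := h (-(Real.sqrt 2 * π * ξ) * Complex.I)
    set z : ℂ := -(Real.sqrt 2 * π * ξ) * Complex.I with hzdef
    have h2 : (Real.sqrt 2 : ℂ) * (Real.sqrt 2 : ℂ) = 2 := by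
      rw [← Complex.ofReal_mul, Real.mul_self_sqrt (by norm_num)]
      norm_num
    have hker : ∀ u : ℝ, bargmannKernel z u * f u
        = Complex.exp ((π : ℂ) ^ 2 * (ξ : ℂ) ^ 2) *
          (Complex.exp ((-2 * π * u * ξ : ℝ) * Complex.I) * g u) := by
      intro u
      rw [bargmannKernel, hg]
      have hexp : -(u : ℂ) ^ 2 / 2 + (Real.sqrt 2 : ℂ) * (u : ℂ) * z - z ^ 2 / 2
          = ((π : ℂ) ^ 2 * (ξ : ℂ) ^ 2) +
            (((-2 * π * u * ξ : ℝ) * Complex.I) + (-(u : ℂ) ^ 2 / 2)) := by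
        rw [hzdef]
        push_cast
        rw [show -(↑u : ℂ) ^ 2 / 2 + ↑(Real.sqrt 2) * ↑u * (-(↑(Real.sqrt 2) * ↑π * ↑ξ) * Complex.I)
              - (-(↑(Real.sqrt 2) * ↑π * ↑ξ) * Complex.I) ^ 2 / 2
            = -(↑u : ℂ) ^ 2 / 2
              - ((↑(Real.sqrt 2) * ↑(Real.sqrt 2)) * (↑u * ↑π * ↑ξ)) * Complex.I
              - ((↑(Real.sqrt 2) * ↑(Real.sqrt 2)) * ((↑π * ↑ξ) * (↑π * ↑ξ)))
                * (Complex.I * Complex.I) / 2 by ring, h2, Complex.I_mul_I]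
        ring
      rw [hexp, Complex.exp_add, Complex.exp_add]
      ring
    have hsplit : (∫ u : ℝ, bargmannKernel z u * f u)
        = Complex.exp ((π : ℂ) ^ 2 * (ξ : ℂ) ^ 2) *
          ∫ u : ℝ, Complex.exp ((-2 * π * u * ξ : ℝ) * Complex.I) * g u := by
      rw [← integral_const_mul]
      congr 1 with u
      exact hker u
    rw [hsplit] at hz
    have hzero : (∫ u : ℝ, Complex.exp ((-2 * π * u * ξ : ℝ) * Complex.I) * g u) = 0 := by
      rcases mul_eq_zero.mp hz with h' | h'
      · exact absurd h' (Complex.exp_ne_zero _)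
      · exact h'
    rw [Real.fourier_real_eq_integral_exp_smul]
    simpa only [smul_eq_mul] using hzero
  -- conclude
  have hgzero := fourier_inj hgint hF
  filter_upwards [hgzero] with u hu
  rw [hg] at hu
  simp only at hu
  rcases mul_eq_zero.mp hu with h' | h'
  · exact absurd h' (Complex.exp_ne_zero _)
  · exact h'
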